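/- Let M ∈ ℝ³ˣ³ be a constant matrix, let β : [0,∞) → ℝ³ be continuous, and let R̃ : [0,∞) → SO(3) be a differentiable curve satisfying R̃' = [β]ₓ R̃. Then the function t ↦ ‖R̃(t)M‖_I = (1/4)Tr((I₃ − R̃(t))M) is differentiable with derivative (d/dt)‖R̃M‖_I = (1/2) · vex(P_a(R̃M))ᵀ β. -/

import Mathlib

open Matrix

noncomputable section

/-- `SO(3)`: real 3×3 matrices with `RᵀR = RRᵀ = I` and `det R = 1`. -/
def so3 (R : Matrix (Fin 3) (Fin 3) ℝ) : Prop :=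
  Rᵀ * R = 1 ∧ R * Rᵀ = 1 ∧ R.det = 1

/-- The skew-symmetric matrix `[y]ₓ` with `[y]ₓ x = y × x`. -/
def skew (y : Fin 3 → ℝ) : Matrix (Fin 3) (Fin 3) ℝ :=
  !![0, -y 2, y 1; y 2, 0, -y 0; -y 1, y 0, 0]

/-- `vex`, the inverse of `[·]ₓ` on skew-symmetric matrices. -/
def vex (A : Matrix (Fin 3) (Fin 3) ℝ) : Fin 3 → ℝ :=
  ![A 2 1, A 0 2, A 1 0]

/-- Anti-symmetric projection `P_a(A) = (A - Aᵀ)/2`. -/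
def Pa (A : Matrix (Fin 3) (Fin 3) ℝ) : Matrix (Fin 3) (Fin 3) ℝ :=
  (1 / 2 : ℝ) • (A - Aᵀ)

/-- Normalized Euclidean distance `‖A‖_I = (1/4) Tr(I - A)`. -/
def normI (A : Matrix (Fin 3) (Fin 3) ℝ) : ℝ :=
  (1 / 4 : ℝ) * Matrix.trace (1 - A)

/-- Euclidean norm on ℝ³. -/
def euclNorm (v : Fin 3 → ℝ) : ℝ := Real.sqrt (∑ i, v i ^ 2)

/-- Homogeneous transformation matrix `T = [R P; 0 1]`. -/
def homT (R : Matrix (Fin 3) (Fin 3) ℝ) (P : Fin 3 → ℝ) :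
    Matrix (Fin 3 ⊕ Fin 1) (Fin 3 ⊕ Fin 1) ℝ :=
  Matrix.fromBlocks R (Matrix.of fun i (_ : Fin 1) => P i) 0 1

/-- `SE(3)`: 4×4 matrices `[R P; 0 1]` with `R ∈ SO(3)`, `P ∈ ℝ³`. -/
def SE3 (T : Matrix (Fin 3 ⊕ Fin 1) (Fin 3 ⊕ Fin 1) ℝ) : Prop :=
  ∃ R P, so3 R ∧ T = homT R P

/-- Wedge map `[U]∧ = [[Ω]ₓ V; 0 0]` for `U = (Ω, V) ∈ ℝ⁶`. -/
def wedge (Ω V : Fin 3 → ℝ) : Matrix (Fin 3 ⊕ Fin 1) (Fin 3 ⊕ Fin 1) ℝ :=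
  Matrix.fromBlocks (skew Ω) (Matrix.of fun i (_ : Fin 1) => V i) 0 0

/-- Wedge map on `ℝ⁶` represented as `Fin 3 ⊕ Fin 3 → ℝ`. -/
def wedgeS (u : Fin 3 ⊕ Fin 3 → ℝ) : Matrix (Fin 3 ⊕ Fin 1) (Fin 3 ⊕ Fin 1) ℝ :=
  wedge (u ∘ Sum.inl) (u ∘ Sum.inr)

/-- Augmented adjoint `Ad̄_T = [R 0; [P]ₓR R]` of `T = [R P; 0 1]`. -/
def adBar (R : Matrix (Fin 3) (Fin 3) ℝ) (P : Fin 3 → ℝ) :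
    Matrix (Fin 3 ⊕ Fin 3) (Fin 3 ⊕ Fin 3) ℝ :=
  Matrix.fromBlocks R 0 (skew P * R) R

/-- `Ad̄_{T⁻¹} = [Rᵀ 0; -Rᵀ[P]ₓ Rᵀ]` for `T = [R P; 0 1]`. -/
def adBarInv (R : Matrix (Fin 3) (Fin 3) ℝ) (P : Fin 3 → ℝ) :
    Matrix (Fin 3 ⊕ Fin 3) (Fin 3 ⊕ Fin 3) ℝ :=
  Matrix.fromBlocks Rᵀ 0 (-(Rᵀ * skew P)) Rᵀ

/-- Rotation block of a 4×4 homogeneous matrix. -/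
def rotOf (T : Matrix (Fin 3 ⊕ Fin 1) (Fin 3 ⊕ Fin 1) ℝ) : Matrix (Fin 3) (Fin 3) ℝ :=
  Matrix.of fun i j => T (Sum.inl i) (Sum.inl j)

/-- Position block of a 4×4 homogeneous matrix. -/
def posOf (T : Matrix (Fin 3 ⊕ Fin 1) (Fin 3 ⊕ Fin 1) ℝ) : Fin 3 → ℝ :=
  fun i => T (Sum.inl i) (Sum.inr 0)

/-- Augmented adjoint of a 4×4 homogeneous matrix. -/
def adBarT (T : Matrix (Fin 3 ⊕ Fin 1) (Fin 3 ⊕ Fin 1) ℝ) :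
    Matrix (Fin 3 ⊕ Fin 3) (Fin 3 ⊕ Fin 3) ℝ :=
  adBar (rotOf T) (posOf T)

/-- Homogeneous coordinates `(v, 1) ∈ ℝ⁴` of `v ∈ ℝ³`. -/
def hvec (v : Fin 3 → ℝ) : Fin 3 ⊕ Fin 1 → ℝ := Sum.elim v 1

/-- if `M` is constant, `β` continuous on `[0,∞)` and `R̃' = [β]ₓ R̃` with
`R̃ ∈ SO(3)` on `[0,∞)`, then `t ↦ ‖R̃(t)M‖_I = (1/4)Tr((I − R̃(t))M)` is differentiable
with derivative `(1/2)·vex(P_a(R̃M))ᵀβ`. -/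
theorem stmt19 (M : Matrix (Fin 3) (Fin 3) ℝ) (β : ℝ → Fin 3 → ℝ)
    (hβ : ContinuousOn β (Set.Ici 0))
    (Rt : ℝ → Matrix (Fin 3) (Fin 3) ℝ) (hRt : ∀ t ≥ (0 : ℝ), so3 (Rt t))
    (hRt' : ∀ t ≥ (0 : ℝ), ∀ i j,
      HasDerivAt (fun s => Rt s i j) ((skew (β t) * Rt t) i j) t) :
    ∀ t ≥ (0 : ℝ),
      HasDerivAt (fun s => (1 / 4 : ℝ) * Matrix.trace ((1 - Rt s) * M))
        ((1 / 2 : ℝ) * (vex (Pa (Rt t * M)) ⬝ᵥ β t)) t := by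
  intro t ht
  have hD := hRt' t ht
  have key : HasDerivAt
      (fun s => (1 / 4 : ℝ) * ∑ i, ∑ j,
        ((1 : Matrix (Fin 3) (Fin 3) ℝ) i j - Rt s i j) * M j i)
      ((1 / 4 : ℝ) * ∑ i, ∑ j, (-((skew (β t) * Rt t) i j)) * M j i) t := by
    apply HasDerivAt.const_mul
    apply HasDerivAt.fun_sum
    intro i _
    apply HasDerivAt.fun_sum
    intro j _
    exact ((hD i j).const_sub _).mul_const _
  have hfun : (fun s => (1 / 4 : ℝ) * Matrix.trace ((1 - Rt s) * M))
      = fun s => (1 / 4 : ℝ) * ∑ i, ∑ j,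
        ((1 : Matrix (Fin 3) (Fin 3) ℝ) i j - Rt s i j) * M j i := by
    funext s
    simp [Matrix.trace, Matrix.mul_apply, Matrix.sub_apply, Matrix.diag]
  have hval : (1 / 2 : ℝ) * (vex (Pa (Rt t * M)) ⬝ᵥ β t)
      = (1 / 4 : ℝ) * ∑ i, ∑ j, (-((skew (β t) * Rt t) i j)) * M j i := by
    simp [vex, Pa, skew, Matrix.mul_apply, dotProduct, Fin.sum_univ_succ,
      Matrix.transpose_apply, Matrix.sub_apply, Matrix.smul_apply, Matrix.cons_val_zero,
      Matrix.cons_val_one]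
    ring
  rw [hfun, hval]
  exact key
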